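/- For r ≥ 1, μ > 0, 1 ≤ s < ∞, and N₁ ≥ 1, the function f₁(t) = 3^{−μ} N₁^{−μ−1/s} Σ_{k=N₁+r}^{2N₁+r−1} T_k(t) satisfies ‖f₁^{(r)}‖_{2,ω}² ≥ 2^{2r} 3^{−2μ} (c*)² N₁^{−2μ + 4r − 2/s + 1} for a constant c* > 0 depending only on r, where f₁^{(r)} is expanded in the orthonormal Chebyshev basis using B_k^r = c* k^{2r−2}. -/

import Mathlib

open Real

noncomputable def chebT (k : ℕ) : ℝ → ℝ := fun t => (Polynomial.Chebyshev.T ℝ k).eval t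

noncomputable def Torth (k : ℕ) : ℝ → ℝ :=
  fun t => (if k = 0 then Real.sqrt π⁻¹ else Real.sqrt (2 / π)) * chebT k t

noncomputable def w (t : ℝ) : ℝ := (1 - t ^ 2) ^ (-(1:ℝ)/2)

noncomputable def chebCoeff (f : ℝ → ℝ) (k : ℕ) : ℝ :=
  ∫ t in (-1:ℝ)..1, w t * f t * Torth k t

noncomputable def normC (g : ℝ → ℝ) : ℝ := ⨆ t : Set.Icc (-1:ℝ) 1, |g t|

noncomputable def normL2 (g : ℝ → ℝ) : ℝ := Real.sqrt (∫ t in (-1:ℝ)..1, w t * (g t) ^ 2)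

noncomputable def normW (s μ : ℝ) (f : ℝ → ℝ) : ℝ :=
  (∑' k : ℕ, (max 1 (k:ℝ)) ^ (s*μ) * |chebCoeff f k| ^ s) ^ (1/s)

noncomputable def chebDeriv (r : ℕ) (f : ℝ → ℝ) : ℝ → ℝ :=
  fun t => ∑' k : ℕ, chebCoeff f k * iteratedDeriv r (Torth k) t

open ENNReal in
noncomputable def seqLpNorm (p : ℝ≥0∞) (ξ : ℕ → ℝ) : ℝ :=
  if p = ⊤ then ⨆ k, |ξ k| else (∑' k, |ξ k| ^ p.toReal) ^ (1 / p.toReal)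


section Helpers
open Polynomial Polynomial.Chebyshev MeasureTheory intervalIntegral



lemma cos_image : Real.cos '' Set.Ioo 0 π = Set.Ioo (-1) 1 := by
  ext x
  constructor
  · rintro ⟨θ, ⟨h0, hπ⟩, rfl⟩
    constructor
    · have := Real.strictAntiOn_cos (Set.mem_Icc.2 ⟨le_of_lt h0, le_of_lt hπ⟩)
        (Set.mem_Icc.2 ⟨Real.pi_pos.le, le_refl π⟩) hπ
      simpa using this
    · have := Real.strictAntiOn_cos (Set.mem_Icc.2 ⟨le_refl 0, Real.pi_pos.le⟩)
        (Set.mem_Icc.2 ⟨le_of_lt h0, le_of_lt hπ⟩) h0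
      simpa using this
  · rintro ⟨h1, h2⟩
    refine ⟨Real.arccos x, ⟨Real.arccos_pos.2 h2, ?_⟩, Real.cos_arccos h1.le h2.le⟩
    rcases lt_or_eq_of_le (Real.arccos_le_pi x) with h | h
    · exact h
    · exfalso
      have : Real.cos (Real.arccos x) = -1 := by rw [h]; simp
      rw [Real.cos_arccos h1.le h2.le] at this
      exact absurd this (by linarith)

lemma weight_integral (g : ℝ → ℝ) :
    ∫ t in (-1:ℝ)..1, w t * g t = ∫ θ in (0:ℝ)..π, g (Real.cos θ) := by
  rw [intervalIntegral.integral_of_le (by norm_num : (-1:ℝ) ≤ 1),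
    intervalIntegral.integral_of_le Real.pi_pos.le,
    MeasureTheory.integral_Ioc_eq_integral_Ioo,
    MeasureTheory.integral_Ioc_eq_integral_Ioo, ← cos_image]
  rw [MeasureTheory.integral_image_eq_integral_abs_deriv_smul measurableSet_Ioo
    (fun θ _ => (Real.hasDerivAt_cos θ).hasDerivWithinAt)
    (Real.injOn_cos.mono (Set.Ioo_subset_Icc_self)) (fun t => w t * g t)]
  refine MeasureTheory.setIntegral_congr_fun measurableSet_Ioo (fun θ hθ => ?_)
  obtain ⟨h0, hπ⟩ := hθ
  have hs : 0 < Real.sin θ := Real.sin_pos_of_pos_of_lt_pi h0 hπ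
  have h1 : w (Real.cos θ) = (Real.sin θ)⁻¹ := by
    unfold w
    have : 1 - Real.cos θ ^ 2 = Real.sin θ ^ 2 := by
      have := Real.sin_sq_add_cos_sq θ; linarith
    rw [this, ← Real.rpow_natCast (Real.sin θ) 2, ← Real.rpow_mul hs.le]
    norm_num
    rw [Real.rpow_neg_one]
  simp only [smul_eq_mul, h1, abs_of_nonpos (by linarith : -Real.sin θ ≤ 0), neg_neg]
  field_simp

lemma intcos (n : ℤ) : ∫ θ in (0:ℝ)..π, Real.cos (n * θ) = if n = 0 then π else 0 := by
  rcases eq_or_ne n 0 with h | h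
  · simp [h]
  · rw [if_neg h]
    have key : ∀ θ : ℝ, HasDerivAt (fun x => Real.sin (n * x) / n) (Real.cos (n * θ)) θ := by
      intro θ
      have h1 : HasDerivAt (fun x : ℝ => (n:ℝ) * x) n θ := by
        simpa using (hasDerivAt_id θ).const_mul (n:ℝ)
      have h2 := (Real.hasDerivAt_sin ((n:ℝ) * θ)).comp θ h1
      have h3 := h2.div_const (n:ℝ)
      have hn : (n:ℝ) ≠ 0 := Int.cast_ne_zero.2 h
      simpa [mul_comm, mul_div_assoc, mul_div_cancel_left₀ _ hn] using h3
    rw [intervalIntegral.integral_eq_sub_of_hasDerivAt (fun θ _ => key θ)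
      ((Real.continuous_cos.comp (continuous_const.mul continuous_id)).intervalIntegrable 0 π)]
    simp [Real.sin_int_mul_pi]

lemma cosOrth (i j : ℕ) : (∫ θ in (0:ℝ)..π, Real.cos (i * θ) * Real.cos (j * θ))
    = if i = j then (if i = 0 then π else π / 2) else 0 := by
  have hint : ∀ n : ℤ, IntervalIntegrable (fun θ => Real.cos (n * θ)) volume 0 π :=
    fun n => (Real.continuous_cos.comp (continuous_const.mul continuous_id)).intervalIntegrable 0 π
  have key : ∀ θ : ℝ, Real.cos (i * θ) * Real.cos (j * θ)
      = (Real.cos (((i - j : ℤ) : ℝ) * θ) + Real.cos (((i + j : ℤ) : ℝ) * θ)) / 2 := by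
    intro θ
    have := Real.two_mul_cos_mul_cos ((i:ℝ) * θ) ((j:ℝ) * θ)
    push_cast
    rw [sub_mul, add_mul]
    linarith
  simp_rw [key]
  rw [intervalIntegral.integral_div, intervalIntegral.integral_add (hint _) (hint _),
    intcos, intcos]
  rcases eq_or_ne i j with rfl | hij
  · rcases eq_or_ne i 0 with rfl | hi
    · norm_num
    · rw [if_pos rfl, if_pos (by omega), if_neg (by omega), if_neg hi]
      ring
  · rw [if_neg hij, if_neg (by omega), if_neg (by omega)]
    norm_num




lemma parseval (K : ℕ) (b : ℕ → ℝ) :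
    ∫ t in (-1:ℝ)..1, w t * (∑ j ∈ Finset.range (K+1), b j * (T ℝ j).eval t) ^ 2
      = ∑ j ∈ Finset.range (K+1), (if j = 0 then π else π / 2) * (b j) ^ 2 := by
  rw [weight_integral (fun t => (∑ j ∈ Finset.range (K+1), b j * (T ℝ j).eval t) ^ 2)]
  have hT : ∀ (j : ℕ) (θ : ℝ), (T ℝ j).eval (Real.cos θ) = Real.cos (j * θ) := by
    intro j θ
    have := Polynomial.Chebyshev.T_real_cos θ (j : ℤ)
    push_cast at this ⊢
    exact this
  have hrw : ∀ θ : ℝ, (∑ j ∈ Finset.range (K+1), b j * (T ℝ j).eval (Real.cos θ)) ^ 2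
      = ∑ j ∈ Finset.range (K+1), ∑ i ∈ Finset.range (K+1),
          (b j * b i) * (Real.cos (j * θ) * Real.cos (i * θ)) := by
    intro θ
    rw [sq, Finset.sum_mul_sum]
    refine Finset.sum_congr rfl fun j _ => Finset.sum_congr rfl fun i _ => ?_
    rw [hT, hT]; ring
  simp_rw [hrw]
  rw [intervalIntegral.integral_finset_sum]
  · have : ∀ j ∈ Finset.range (K+1),
        (∫ θ in (0:ℝ)..π, ∑ i ∈ Finset.range (K+1),
          (b j * b i) * (Real.cos (j * θ) * Real.cos (i * θ)))
        = (if j = 0 then π else π / 2) * (b j) ^ 2 := by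
      intro j hj
      rw [intervalIntegral.integral_finset_sum]
      · have h2 : ∀ i ∈ Finset.range (K+1),
            (∫ θ in (0:ℝ)..π, (b j * b i) * (Real.cos (j * θ) * Real.cos (i * θ)))
            = (b j * b i) * (if j = i then (if j = 0 then π else π / 2) else 0) := by
          intro i _
          rw [intervalIntegral.integral_const_mul, cosOrth]
        rw [Finset.sum_congr rfl h2, Finset.sum_eq_single j]
        · simp [sq]; ring
        · intro i _ hij; simp [Ne.symm hij]
        · intro h; exact absurd hj h
      · intro i _
        apply Continuous.intervalIntegrable
        fun_prop
    rw [Finset.sum_congr rfl this]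
  · intro j _
    apply Continuous.intervalIntegrable
    continuity

noncomputable def eps (m j : ℕ) : ℝ :=
  if j ≤ m ∧ (m - j) % 2 = 0 then (if j = 0 then 1 else 2) else 0

lemma eps_nonneg (m j : ℕ) : 0 ≤ eps m j := by
  unfold eps; split <;> [skip; norm_num] ; split <;> norm_num

lemma eps_stable (m j : ℕ) (hj : j ≤ m) : eps (m+2) j = eps m j := by
  unfold eps
  have h : (j ≤ m + 2 ∧ (m + 2 - j) % 2 = 0) ↔ (j ≤ m ∧ (m - j) % 2 = 0) := by omega
  rw [if_congr h rfl rfl]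

lemma U_step (R : Type*) [CommRing R] (m : ℕ) :
    U R ((m:ℤ) + 2) = U R m + 2 * T R ((m:ℤ) + 2) := by
  have h1 := U_add_two R m
  have h2 := U_eq_X_mul_U_add_T R ((m:ℤ) + 1)
  have h3 : (m:ℤ) + 1 + 1 = (m:ℤ) + 2 := by ring
  rw [h3] at h2
  linear_combination 2 * h2 - h1

lemma U_expand (m : ℕ) : U ℝ m = ∑ j ∈ Finset.range (m+1), C (eps m j) * T ℝ j := by
  induction m using Nat.strong_induction_on with
  | _ m ih =>
    match m with
    | 0 => simp [eps, U_zero, T_zero]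
    | 1 =>
      have h1 : U ℝ ((1:ℕ):ℤ) = 2 * X := by norm_num [U_one]
      rw [h1, Finset.sum_range_succ, Finset.sum_range_one]
      have h2 : T ℝ ((1:ℕ):ℤ) = X := by norm_num [T_one]
      norm_num [eps, h2, T_one, map_ofNat]
    | (m+2) =>
      have hcast : ((m+2 : ℕ) : ℤ) = (m:ℤ) + 2 := by push_cast; ring
      rw [hcast, U_step ℝ m, ih m (by omega)]
      conv_rhs => rw [Finset.sum_range_succ, Finset.sum_range_succ]
      have e1 : eps (m+2) (m+1) = 0 := by
        unfold eps; rw [if_neg]; rintro ⟨_, h⟩; omega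
      have e2 : eps (m+2) (m+2) = 2 := by
        unfold eps; rw [if_pos ⟨le_refl _, by omega⟩, if_neg (by omega)]
      have e3 : ∀ j ∈ Finset.range (m+1), C (eps m j) * T ℝ j = C (eps (m+2) j) * T ℝ j := by
        intro j hj
        rw [eps_stable m j (by simpa [Nat.lt_succ_iff] using hj)]
      rw [Finset.sum_congr rfl e3, e1, e2, hcast]
      simp only [map_ofNat, map_zero]
      ring

noncomputable def Bc : ℕ → ℕ → ℕ → ℝ
  | 0, k, j => if j = k then 1 else 0
  | (r+1), k, j => ∑ m ∈ Finset.range (k+1), Bc r k m * m * eps (m-1) j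

lemma Bc_nonneg (r k j : ℕ) : 0 ≤ Bc r k j := by
  induction r generalizing j with
  | zero => unfold Bc; split <;> norm_num
  | succ r ih =>
    unfold Bc
    exact Finset.sum_nonneg fun m _ =>
      mul_nonneg (mul_nonneg (ih m) (by positivity)) (eps_nonneg _ _)

lemma eps_eq_zero (m j : ℕ) (h : m < j) : eps m j = 0 := by
  unfold eps; rw [if_neg]; rintro ⟨h1, _⟩; omega

lemma derivT_expand (r k : ℕ) :
    derivative^[r] (T ℝ k) = ∑ j ∈ Finset.range (k+1), C (Bc r k j) * T ℝ j := by
  induction r with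
  | zero =>
    simp only [Function.iterate_zero, id_eq]
    rw [Finset.sum_eq_single k]
    · show _ = C (if k = k then (1:ℝ) else 0) * T ℝ k
      rw [if_pos rfl]; simp
    · intro j _ hj
      show C (if j = k then (1:ℝ) else 0) * T ℝ j = 0
      rw [if_neg hj]; simp
    · intro h; exact absurd (Finset.self_mem_range_succ k) h
  | succ r ih =>
    rw [Function.iterate_succ_apply', ih, derivative_sum]
    have hterm : ∀ j ∈ Finset.range (k+1), derivative (C (Bc r k j) * T ℝ j)
        = ∑ i ∈ Finset.range (k+1), C (Bc r k j * j * eps (j-1) i) * T ℝ i := by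
      intro j hj
      rw [derivative_C_mul, T_derivative_eq_U]
      rcases Nat.eq_zero_or_pos j with rfl | hjpos
      · simp
      · have hc : ((j-1:ℕ):ℤ) = (j:ℤ) - 1 := by omega
        have hU : U ℝ ((j:ℤ) - 1) = ∑ i ∈ Finset.range j, C (eps (j-1) i) * T ℝ i := by
          rw [← hc, U_expand (j-1), show (j-1)+1 = j from by omega]
        have hsub : Finset.range j ⊆ Finset.range (k+1) :=
          Finset.range_subset_range.2 (by simp at hj; omega)
        rw [hU, Finset.mul_sum, Finset.mul_sum]
        rw [Finset.sum_subset hsub]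
        · refine Finset.sum_congr rfl fun i _ => ?_
          have hcast : ((j:ℤ) : ℝ[X]) = C (j:ℝ) := by push_cast; simp
          rw [hcast, map_mul, map_mul]
          ring
        · intro i _ hi
          rw [eps_eq_zero (j-1) i (by simp at hi ⊢; omega)]
          simp
    rw [Finset.sum_congr rfl hterm, Finset.sum_comm]
    refine Finset.sum_congr rfl fun i _ => ?_
    show _ = C (∑ m ∈ Finset.range (k+1), Bc r k m * m * eps (m-1) i) * T ℝ i
    rw [map_sum, Finset.sum_mul]

lemma Bc_one (k j : ℕ) (h1 : 1 ≤ j) (h2 : j + 1 ≤ k) (h3 : (k - 1 - j) % 2 = 0) :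
    Bc 1 k j = 2 * k := by
  show (∑ m ∈ Finset.range (k+1), Bc 0 k m * m * eps (m-1) j) = 2*k
  rw [Finset.sum_eq_single k]
  · show (if k = k then (1:ℝ) else 0) * k * eps (k-1) j = 2*k
    rw [if_pos rfl]
    unfold eps
    rw [if_pos ⟨by omega, by omega⟩, if_neg (by omega)]
    ring
  · intro mm _ hm
    show (if mm = k then (1:ℝ) else 0) * mm * eps (mm-1) j = 0
    rw [if_neg hm]; ring
  · intro h; exact absurd (Finset.self_mem_range_succ k) h

lemma sum_odds (n : ℕ) : ∑ v ∈ Finset.range n, (2*(v:ℝ)+1) = (n:ℝ)^2 := by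
  induction n with
  | zero => simp
  | succ n ih => rw [Finset.sum_range_succ, ih]; push_cast; ring

set_option maxHeartbeats 1000000 in
lemma Bc_lower (r : ℕ) (hr : 1 ≤ r) : ∀ k j : ℕ, 1 ≤ j → j + r ≤ k → (k - r - j) % 2 = 0 →
    2 * (k:ℝ) * ((k - r - j + 1 : ℕ):ℝ)^(2*r-2) / (4:ℝ)^(r^2) ≤ Bc r k j := by
  induction r, hr using Nat.le_induction with
  | base =>
    intro k j hj hjk hpar
    rw [Bc_one k j hj (by omega) hpar]
    norm_num
    have hk : (0:ℝ) ≤ k := by positivity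
    linarith
  | succ r hr ih =>
    intro k j hj hjk hpar
    have hj1 : (1:ℝ) ≤ (j:ℝ) := by exact_mod_cast hj
    obtain ⟨G, hG⟩ : ∃ G, k - (r+1) - j = 2*G := ⟨(k-(r+1)-j)/2, by omega⟩
    have hk0 : (0:ℝ) ≤ (k:ℝ) := by positivity
    have hQ : (0:ℝ) < (4:ℝ)^(r^2) := by positivity
    -- pointwise bound on selected terms
    have hterm : ∀ v ∈ Finset.range (G+1),
        (2*(k:ℝ) * ((2*(G-v)+1:ℕ):ℝ)^(2*r-2) / (4:ℝ)^(r^2)) * (2*(v:ℝ)+1) * 2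
        ≤ Bc r k (j+1+2*v) * ((j+1+2*v : ℕ):ℝ) * eps ((j+1+2*v) - 1) j := by
      intro v hv
      simp only [Finset.mem_range] at hv
      have heps : eps ((j+1+2*v) - 1) j = 2 := by
        unfold eps
        rw [if_pos ⟨by omega, by omega⟩, if_neg (by omega)]
      have hgap : (k - r - (j+1+2*v) + 1 : ℕ) = 2*(G-v)+1 := by omega
      have hBc := ih k (j+1+2*v) (by omega) (by omega) (by omega)
      rw [hgap] at hBc
      have hmv : (2*(v:ℝ)+1) ≤ ((j+1+2*v : ℕ):ℝ) := by
        push_cast; linarith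
      rw [heps]
      have h1 : (0:ℝ) ≤ 2*(k:ℝ) * ((2*(G-v)+1:ℕ):ℝ)^(2*r-2) / (4:ℝ)^(r^2) := by positivity
      have h2 : (0:ℝ) ≤ 2*(v:ℝ)+1 := by positivity
      have h3 := Bc_nonneg r k (j+1+2*v)
      nlinarith [mul_le_mul hBc hmv h2 h3]
    -- sum over image is at most Bc (r+1)
    have hsum1 : ∑ v ∈ Finset.range (G+1), Bc r k (j+1+2*v) * ((j+1+2*v : ℕ):ℝ) * eps ((j+1+2*v) - 1) j
        ≤ Bc (r+1) k j := by
      show _ ≤ ∑ mm ∈ Finset.range (k+1), Bc r k mm * mm * eps (mm-1) j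
      rw [← Finset.sum_image (f := fun mm => Bc r k mm * (mm:ℝ) * eps (mm-1) j)
        (g := fun v => j+1+2*v) (fun a _ b _ h => by simp only [] at h; omega)]
      apply Finset.sum_le_sum_of_subset_of_nonneg
      · intro x hx
        simp only [Finset.mem_image, Finset.mem_range] at hx ⊢
        obtain ⟨v, hv, rfl⟩ := hx
        omega
      · intro i _ _
        exact mul_nonneg (mul_nonneg (Bc_nonneg _ _ _) (by positivity)) (eps_nonneg _ _)
    -- restrict to lower half and bound the inner power
    have hsum2 : ∑ v ∈ Finset.range (G/2+1),
          (2*(k:ℝ) * (((G:ℝ)+1))^(2*r-2) / (4:ℝ)^(r^2)) * (2*(v:ℝ)+1) * 2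
        ≤ ∑ v ∈ Finset.range (G+1),
          (2*(k:ℝ) * ((2*(G-v)+1:ℕ):ℝ)^(2*r-2) / (4:ℝ)^(r^2)) * (2*(v:ℝ)+1) * 2 := by
      have hsub : Finset.range (G/2+1) ⊆ Finset.range (G+1) :=
        Finset.range_subset_range.2 (by omega)
      calc ∑ v ∈ Finset.range (G/2+1),
            (2*(k:ℝ) * (((G:ℝ)+1))^(2*r-2) / (4:ℝ)^(r^2)) * (2*(v:ℝ)+1) * 2
          ≤ ∑ v ∈ Finset.range (G/2+1),
            (2*(k:ℝ) * ((2*(G-v)+1:ℕ):ℝ)^(2*r-2) / (4:ℝ)^(r^2)) * (2*(v:ℝ)+1) * 2 := by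
            apply Finset.sum_le_sum
            intro v hv
            simp only [Finset.mem_range] at hv
            have hpow : (((G:ℝ)+1))^(2*r-2) ≤ ((2*(G-v)+1:ℕ):ℝ)^(2*r-2) := by
              apply pow_le_pow_left₀ (by positivity)
              have : (G+1 : ℕ) ≤ (2*(G-v)+1 : ℕ) := by omega
              exact_mod_cast this
            gcongr
        _ ≤ _ := by
            apply Finset.sum_le_sum_of_subset_of_nonneg hsub
            intro i _ _
            positivity
    -- evaluate the restricted sum
    have hsum3 : ∑ v ∈ Finset.range (G/2+1),
          (2*(k:ℝ) * (((G:ℝ)+1))^(2*r-2) / (4:ℝ)^(r^2)) * (2*(v:ℝ)+1) * 2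
        = (2*(k:ℝ) * (((G:ℝ)+1))^(2*r-2) / (4:ℝ)^(r^2)) * 2 * ((G/2+1 : ℕ):ℝ)^2 := by
      rw [← Finset.sum_mul, ← Finset.mul_sum, sum_odds]
      ring
    -- numeric comparison
    have hfinal : 2 * (k:ℝ) * ((k - (r+1) - j + 1 : ℕ):ℝ)^(2*(r+1)-2) / (4:ℝ)^((r+1)^2)
        ≤ (2*(k:ℝ) * (((G:ℝ)+1))^(2*r-2) / (4:ℝ)^(r^2)) * 2 * ((G/2+1 : ℕ):ℝ)^2 := by
      have hc1 : (k - (r+1) - j + 1 : ℕ) = 2*G+1 := by omega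
      have hc2 : ((2*G+1 : ℕ):ℝ) = 2*(G:ℝ)+1 := by push_cast; ring
      have hexp : 2*(r+1)-2 = 2*r := by omega
      rw [hc1, hc2, hexp]
      set y := (G:ℝ) with hy
      have hy0 : (0 ≤ y) := by positivity
      have hs : ((y+1)/2) ≤ ((G/2+1 : ℕ):ℝ) := by
        have h := (Nat.cast_le (α := ℝ)).2 (show G+1 ≤ 2*(G/2+1) by omega)
        push_cast at h ⊢
        linarith
      have hs0 : (0:ℝ) ≤ ((G/2+1 : ℕ):ℝ) := by positivity
      have hZs : (y+1)^2 ≤ 4 * ((G/2+1 : ℕ):ℝ)^2 := by nlinarith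
      have hsplit : (y+1)^(2*r) = (y+1)^(2*r-2) * (y+1)^2 := by
        rw [← pow_add]; congr 1; omega
      have hpow1 : (2*y+1)^(2*r) ≤ (4:ℝ)^r * ((y+1)^(2*r-2) * (y+1)^2) := by
        have h1 : (2*y+1)^(2*r) ≤ (2*(y+1))^(2*r) :=
          pow_le_pow_left₀ (by linarith) (by linarith) _
        have h2 : ((2:ℝ)*(y+1))^(2*r) = (4:ℝ)^r * (y+1)^(2*r) := by
          rw [mul_pow]
          congr 1
          rw [show (4:ℝ) = 2^2 by norm_num, ← pow_mul]
        rw [h2, hsplit] at h1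
        linarith [h1]
      have hQ4 : (4:ℝ)^((r+1)^2) = (4:ℝ)^(r^2) * (4:ℝ)^(2*r+1) := by
        rw [← pow_add]; congr 1; ring
      have hAB : 2 * (4:ℝ)^r ≤ (4:ℝ)^(2*r+1) := by
        rw [pow_succ]
        have h1 : (4:ℝ)^r ≤ (4:ℝ)^(2*r) := pow_le_pow_right₀ (by norm_num) (by omega)
        have h0 : (0:ℝ) ≤ (4:ℝ)^(2*r) := by positivity
        linarith
      have hP0 : (0:ℝ) ≤ (y+1)^(2*r-2) := by positivity
      have hB0 : (0:ℝ) < (4:ℝ)^(2*r+1) := by positivity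
      rw [hQ4]
      rw [div_le_iff₀ (by positivity)]
      have target : 2*(k:ℝ) * (2*y+1)^(2*r)
          ≤ (2*(k:ℝ) * (y+1)^(2*r-2) / (4:ℝ)^(r^2)) * 2 * ((G/2+1 : ℕ):ℝ)^2
            * ((4:ℝ)^(r^2) * (4:ℝ)^(2*r+1)) := by
        have e1 : (2*(k:ℝ) * (y+1)^(2*r-2) / (4:ℝ)^(r^2)) * 2 * ((G/2+1 : ℕ):ℝ)^2
            * ((4:ℝ)^(r^2) * (4:ℝ)^(2*r+1))
            = 4*(k:ℝ) * (y+1)^(2*r-2) * ((G/2+1 : ℕ):ℝ)^2 * (4:ℝ)^(2*r+1) := by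
          field_simp
          ring
        rw [e1]
        calc 2*(k:ℝ) * (2*y+1)^(2*r)
            ≤ 2*(k:ℝ) * ((4:ℝ)^r * ((y+1)^(2*r-2) * (y+1)^2)) := by
              have := mul_le_mul_of_nonneg_left hpow1 (by positivity : (0:ℝ) ≤ 2*(k:ℝ))
              linarith
          _ ≤ 2*(k:ℝ) * ((4:ℝ)^r * ((y+1)^(2*r-2) * (4 * ((G/2+1 : ℕ):ℝ)^2))) := by
              gcongr
          _ = (k:ℝ) * (y+1)^(2*r-2) * ((G/2+1 : ℕ):ℝ)^2 * (8 * (4:ℝ)^r) := by ring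
          _ ≤ (k:ℝ) * (y+1)^(2*r-2) * ((G/2+1 : ℕ):ℝ)^2 * (4 * (4:ℝ)^(2*r+1)) := by
              have hc : (8:ℝ) * (4:ℝ)^r ≤ 4 * (4:ℝ)^(2*r+1) := by linarith
              have hnn : (0:ℝ) ≤ (k:ℝ) * (y+1)^(2*r-2) * ((G/2+1 : ℕ):ℝ)^2 := by positivity
              exact mul_le_mul_of_nonneg_left hc hnn
          _ = 4*(k:ℝ) * (y+1)^(2*r-2) * ((G/2+1 : ℕ):ℝ)^2 * (4:ℝ)^(2*r+1) := by ring
      exact target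
    calc 2 * (k:ℝ) * ((k - (r+1) - j + 1 : ℕ):ℝ)^(2*(r+1)-2) / (4:ℝ)^((r+1)^2)
        ≤ (2*(k:ℝ) * (((G:ℝ)+1))^(2*r-2) / (4:ℝ)^(r^2)) * 2 * ((G/2+1 : ℕ):ℝ)^2 := hfinal
      _ = ∑ v ∈ Finset.range (G/2+1),
          (2*(k:ℝ) * (((G:ℝ)+1))^(2*r-2) / (4:ℝ)^(r^2)) * (2*(v:ℝ)+1) * 2 := hsum3.symm
      _ ≤ ∑ v ∈ Finset.range (G+1),
          (2*(k:ℝ) * ((2*(G-v)+1:ℕ):ℝ)^(2*r-2) / (4:ℝ)^(r^2)) * (2*(v:ℝ)+1) * 2 := hsum2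
      _ ≤ ∑ v ∈ Finset.range (G+1),
          Bc r k (j+1+2*v) * ((j+1+2*v : ℕ):ℝ) * eps ((j+1+2*v) - 1) j :=
            Finset.sum_le_sum hterm
      _ ≤ Bc (r+1) k j := hsum1


lemma Bc_gt_eq_zero (r k j : ℕ) (h : k < j) : Bc r k j = 0 := by
  cases r with
  | zero =>
    show (if j = k then (1:ℝ) else 0) = 0
    rw [if_neg (by omega)]
  | succ r =>
    show (∑ m ∈ Finset.range (k+1), Bc r k m * m * eps (m-1) j) = 0
    apply Finset.sum_eq_zero
    intro m hm
    simp only [Finset.mem_range] at hm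
    rw [eps_eq_zero (m-1) j (by omega), mul_zero]

lemma itder_sum {ι : Type*} (r : ℕ) (s : Finset ι) (f : ι → Polynomial ℝ) :
    Polynomial.derivative^[r] (∑ i ∈ s, f i) = ∑ i ∈ s, Polynomial.derivative^[r] (f i) := by
  induction r with
  | zero => simp
  | succ r ih =>
    simp only [Function.iterate_succ_apply', ih, Polynomial.derivative_sum]

lemma itderiv_eval (r : ℕ) (p : Polynomial ℝ) :
    iteratedDeriv r (fun t => p.eval t) = fun t => (Polynomial.derivative^[r] p).eval t := by
  induction r generalizing p with
  | zero => simp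
  | succ r ih =>
    rw [iteratedDeriv_succ', Function.iterate_succ_apply]
    rw [show (deriv fun t => p.eval t) = fun t => (Polynomial.derivative p).eval t from
      funext fun x => Polynomial.deriv p]
    exact ih (Polynomial.derivative p)

end Helpers
set_option maxHeartbeats 2000000 in
/-- lower bound on the L_{2,ω}-norm of the r-th derivative of f₁,
with a constant c* depending only on r. -/
theorem stmt17 (r : ℕ) (hr : 1 ≤ r) :
    ∃ cstar > 0, ∀ (μ s : ℝ) (N₁ : ℕ), 0 < μ → 1 ≤ s → 1 ≤ N₁ →
      (normL2 (iteratedDeriv r (fun t =>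
          (3:ℝ) ^ (-μ) * (N₁:ℝ) ^ (-μ - 1/s) *
            ∑ k ∈ Finset.Icc (N₁ + r) (2*N₁ + r - 1), Torth k t))) ^ 2
        ≥ (2:ℝ) ^ (2*r) * (3:ℝ) ^ (-2*μ) * cstar ^ 2 *
            (N₁:ℝ) ^ (-2*μ + 4*(r:ℝ) - 2/s + 1) := by
  classical
  refine ⟨Real.sqrt ((2:ℝ)^(2*r) * ((2:ℝ)^(4*r) * (4:ℝ)^(2*r^2)))⁻¹,
    Real.sqrt_pos.2 (by positivity), ?_⟩
  intro μ s N hμ hs hN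
  have hNpos : (0:ℝ) < (N:ℝ) := by exact_mod_cast Nat.lt_of_lt_of_le Nat.zero_lt_one hN
  have hN1 : (1:ℝ) ≤ (N:ℝ) := by exact_mod_cast hN
  set K := 2*N + r - 1 with hK
  set c₀ : ℝ := (3:ℝ)^(-μ) * (N:ℝ)^(-μ - 1/s) with hc₀
  have hc₀pos : 0 < c₀ := mul_pos (Real.rpow_pos_of_pos (by norm_num) _)
    (Real.rpow_pos_of_pos hNpos _)
  set a : ℝ := Real.sqrt (2/π) with ha
  have hapos : 0 < a := Real.sqrt_pos.2 (by positivity)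
  have hasq : a^2 = 2/π := Real.sq_sqrt (by positivity)
  set A : ℕ → ℝ := fun j => ∑ k ∈ Finset.Icc (N+r) K, Bc r k j with hA
  set b : ℕ → ℝ := fun j => c₀ * a * A j with hb
  have hAnn : ∀ j, 0 ≤ A j := fun j => Finset.sum_nonneg fun k _ => Bc_nonneg r k j
  have hbnn : ∀ j, 0 ≤ b j := fun j =>
    mul_nonneg (mul_nonneg hc₀pos.le hapos.le) (hAnn j)
  -- Stage A: the function is the evaluation of a polynomial
  have hfun : (fun t => c₀ * ∑ k ∈ Finset.Icc (N+r) K, Torth k t)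
      = fun t => (Polynomial.C (c₀*a) *
          ∑ k ∈ Finset.Icc (N+r) K, Polynomial.Chebyshev.T ℝ k).eval t := by
    funext t
    rw [Polynomial.eval_mul, Polynomial.eval_C, Polynomial.eval_finset_sum]
    have h1 : ∀ k ∈ Finset.Icc (N+r) K,
        Torth k t = a * (Polynomial.Chebyshev.T ℝ k).eval t := by
      intro k hk
      simp only [Finset.mem_Icc, hK] at hk
      unfold Torth chebT
      rw [if_neg (by omega)]
    rw [Finset.sum_congr rfl h1, ← Finset.mul_sum]
    ring
  -- Stage B: iterated derivative of the polynomial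
  have hP : Polynomial.derivative^[r]
        (Polynomial.C (c₀*a) * ∑ k ∈ Finset.Icc (N+r) K, Polynomial.Chebyshev.T ℝ k)
      = ∑ j ∈ Finset.range (K+1), Polynomial.C (b j) * Polynomial.Chebyshev.T ℝ j := by
    rw [Polynomial.iterate_derivative_C_mul, itder_sum]
    have h1 : ∀ k ∈ Finset.Icc (N+r) K, Polynomial.derivative^[r] (Polynomial.Chebyshev.T ℝ k)
        = ∑ j ∈ Finset.range (K+1), Polynomial.C (Bc r k j) * Polynomial.Chebyshev.T ℝ j := by
      intro k hk
      simp only [Finset.mem_Icc, hK] at hk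
      rw [derivT_expand r k]
      apply Finset.sum_subset (Finset.range_subset_range.2 (by omega))
      intro j _ hj
      simp only [Finset.mem_range] at hj
      rw [Bc_gt_eq_zero r k j (by omega)]
      simp
    rw [Finset.sum_congr rfl h1, Finset.sum_comm, Finset.mul_sum]
    refine Finset.sum_congr rfl fun j _ => ?_
    rw [← Finset.sum_mul, ← map_sum, ← mul_assoc, ← map_mul]
  -- Stage C: the iterated derivative of the function
  have hDer : iteratedDeriv r (fun t => c₀ * ∑ k ∈ Finset.Icc (N+r) K, Torth k t)
      = fun t => ∑ j ∈ Finset.range (K+1), b j * (Polynomial.Chebyshev.T ℝ j).eval t := by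
    rw [hfun, itderiv_eval, hP]
    funext t
    rw [Polynomial.eval_finset_sum]
    refine Finset.sum_congr rfl fun j _ => ?_
    rw [Polynomial.eval_mul, Polynomial.eval_C]
  rw [hDer]
  -- Stage D: Parseval
  unfold normL2
  have hPar := parseval K b
  rw [hPar, Real.sq_sqrt]
  swap
  · apply Finset.sum_nonneg
    intro j _
    have : (0:ℝ) < π := Real.pi_pos
    split <;> positivity
  -- Stage E: lower bounds
  set L : ℝ := (N:ℝ)/4 * (2*(N:ℝ)*((N:ℝ)/2)^(2*r-2)/(4:ℝ)^(r^2)) with hL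
  have hLnn : 0 ≤ L := by positivity
  have hLB : ∀ q, q < (N+1)/2 → L ≤ A (2*q+1) := by
    intro q hq
    have hsubK : Finset.image (fun u => K - 2*u) (Finset.range (N/4+1))
        ⊆ Finset.Icc (N+r) K := by
      intro x hx
      simp only [Finset.mem_image, Finset.mem_range] at hx
      obtain ⟨u, hu, rfl⟩ := hx
      simp only [Finset.mem_Icc, hK]
      omega
    have hterm : ∀ u ∈ Finset.range (N/4+1),
        2*(N:ℝ)*((N:ℝ)/2)^(2*r-2)/(4:ℝ)^(r^2) ≤ Bc r (K-2*u) (2*q+1) := by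
      intro u hu
      simp only [Finset.mem_range] at hu
      have hlow := Bc_lower r hr (K-2*u) (2*q+1) (by omega) (by simp only [hK]; omega)
        (by simp only [hK]; omega)
      refine le_trans ?_ hlow
      have hk2 : (N:ℝ) ≤ ((K-2*u:ℕ):ℝ) := by
        have : (N:ℕ) ≤ K-2*u := by simp only [hK]; omega
        exact_mod_cast this
      have hgap : (N:ℝ)/2 ≤ ((K-2*u - r - (2*q+1) + 1 : ℕ):ℝ) := by
        have h2 : N ≤ 2*(K-2*u - r - (2*q+1) + 1) := by simp only [hK]; omega
        have := (Nat.cast_le (α := ℝ)).2 h2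
        push_cast at this ⊢
        linarith
      have hpw : ((N:ℝ)/2)^(2*r-2) ≤ ((K-2*u - r - (2*q+1) + 1 : ℕ):ℝ)^(2*r-2) :=
        pow_le_pow_left₀ (by positivity) hgap _
      gcongr
    calc L = (((N/4+1 : ℕ)):ℝ) * (2*(N:ℝ)*((N:ℝ)/2)^(2*r-2)/(4:ℝ)^(r^2))
          - ((((N/4+1 : ℕ)):ℝ) - (N:ℝ)/4) * (2*(N:ℝ)*((N:ℝ)/2)^(2*r-2)/(4:ℝ)^(r^2)) := by
          rw [hL]; ring
      _ ≤ (((N/4+1 : ℕ)):ℝ) * (2*(N:ℝ)*((N:ℝ)/2)^(2*r-2)/(4:ℝ)^(r^2)) := by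
          have hcard : (N:ℝ)/4 ≤ (((N/4+1 : ℕ)):ℝ) := by
            have h2 : N ≤ 4*(N/4+1) := by omega
            have := (Nat.cast_le (α := ℝ)).2 h2
            push_cast at this ⊢
            linarith
          have h0 : (0:ℝ) ≤ 2*(N:ℝ)*((N:ℝ)/2)^(2*r-2)/(4:ℝ)^(r^2) := by positivity
          nlinarith
      _ = ∑ u ∈ Finset.range (N/4+1), 2*(N:ℝ)*((N:ℝ)/2)^(2*r-2)/(4:ℝ)^(r^2) := by
          rw [Finset.sum_const, Finset.card_range, nsmul_eq_mul]
      _ ≤ ∑ u ∈ Finset.range (N/4+1), Bc r (K-2*u) (2*q+1) := Finset.sum_le_sum hterm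
      _ = ∑ k ∈ Finset.image (fun u => K - 2*u) (Finset.range (N/4+1)), Bc r k (2*q+1) := by
          rw [Finset.sum_image (fun u₁ hu₁ u₂ hu₂ h => by
            simp only [Finset.coe_range, Set.mem_Iio, Finset.mem_coe, Finset.mem_range] at hu₁ hu₂
            simp only [hK] at h
            omega)]
      _ ≤ A (2*q+1) := by
          rw [hA]
          exact Finset.sum_le_sum_of_subset_of_nonneg hsubK fun k _ _ => Bc_nonneg r k _
  -- restrict the sum to odd indices
  have hJsub : Finset.image (fun q => 2*q+1) (Finset.range ((N+1)/2))
      ⊆ Finset.range (K+1) := by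
    intro x hx
    simp only [Finset.mem_image, Finset.mem_range] at hx ⊢
    obtain ⟨q, hq, rfl⟩ := hx
    simp only [hK]
    omega
  have hmain : ((((N+1)/2 : ℕ)):ℝ) * ((π/2) * (c₀ * a * L)^2)
      ≤ ∑ j ∈ Finset.range (K+1), (if j = 0 then π else π/2) * (b j)^2 := by
    calc ((((N+1)/2 : ℕ)):ℝ) * ((π/2) * (c₀ * a * L)^2)
        = ∑ j ∈ Finset.image (fun q => 2*q+1) (Finset.range ((N+1)/2)),
            (π/2) * (c₀ * a * L)^2 := by
          rw [Finset.sum_const, Finset.card_image_of_injective _ (fun q₁ q₂ h => by omega),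
            Finset.card_range, nsmul_eq_mul]
      _ ≤ ∑ j ∈ Finset.image (fun q => 2*q+1) (Finset.range ((N+1)/2)),
            (if j = 0 then π else π/2) * (b j)^2 := by
          apply Finset.sum_le_sum
          intro j hj
          simp only [Finset.mem_image, Finset.mem_range] at hj
          obtain ⟨q, hq, rfl⟩ := hj
          rw [if_neg (by omega)]
          have hble : c₀ * a * L ≤ b (2*q+1) := by
            show c₀ * a * L ≤ c₀ * a * A (2*q+1)
            have := hLB q hq
            have h0 : 0 ≤ c₀ * a := mul_nonneg hc₀pos.le hapos.le
            nlinarith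
          have h1 : (c₀ * a * L)^2 ≤ (b (2*q+1))^2 :=
            pow_le_pow_left₀ (by positivity) hble 2
          have hπ : (0:ℝ) < π := Real.pi_pos
          nlinarith
      _ ≤ ∑ j ∈ Finset.range (K+1), (if j = 0 then π else π/2) * (b j)^2 := by
          apply Finset.sum_le_sum_of_subset_of_nonneg hJsub
          intro j _ _
          have hπ : (0:ℝ) < π := Real.pi_pos
          split <;> positivity
  refine le_trans ?_ hmain
  -- final numeric computation
  have hcsq : (Real.sqrt ((2:ℝ)^(2*r) * ((2:ℝ)^(4*r) * (4:ℝ)^(2*r^2)))⁻¹)^2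
      = ((2:ℝ)^(2*r) * ((2:ℝ)^(4*r) * (4:ℝ)^(2*r^2)))⁻¹ := Real.sq_sqrt (by positivity)
  rw [hcsq]
  set x : ℝ := (N:ℝ) with hx
  have hcard2 : x/2 ≤ ((((N+1)/2 : ℕ)):ℝ) := by
    have h2 : N ≤ 2*((N+1)/2) := by omega
    have := (Nat.cast_le (α := ℝ)).2 h2
    push_cast at this ⊢
    linarith
  have hasq2 : (c₀ * a * L)^2 = c₀^2 * (2/π) * L^2 := by
    rw [mul_pow, mul_pow, hasq]
  have hrpow : c₀^2 * x^(4*r+1 : ℕ) = (3:ℝ)^(-2*μ) * x^(-2*μ + 4*(r:ℝ) - 2/s + 1) := by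
    rw [hc₀, mul_pow]
    have h3 : ((3:ℝ)^(-μ))^2 = (3:ℝ)^(-2*μ) := by
      rw [← Real.rpow_natCast ((3:ℝ)^(-μ)) 2, ← Real.rpow_mul (by norm_num : (0:ℝ) ≤ 3)]
      norm_num
      ring_nf
    have hx3 : (x^(-μ-1/s))^2 * x^(4*r+1 : ℕ) = x^(-2*μ + 4*(r:ℝ) - 2/s + 1) := by
      rw [← Real.rpow_natCast (x^(-μ-1/s)) 2, ← Real.rpow_mul hNpos.le,
        ← Real.rpow_natCast x (4*r+1), ← Real.rpow_add hNpos]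
      congr 1
      push_cast
      ring
    calc ((3:ℝ)^(-μ))^2 * (x^(-μ-1/s))^2 * x^(4*r+1 : ℕ)
        = ((3:ℝ)^(-μ))^2 * ((x^(-μ-1/s))^2 * x^(4*r+1 : ℕ)) := by ring
      _ = (3:ℝ)^(-2*μ) * x^(-2*μ + 4*(r:ℝ) - 2/s + 1) := by rw [h3, hx3]
  -- (x/2) * L^2 ≥ x^(4r+1) / (2^(4r) * 4^(2r^2))
  have hLval : x^(4*r+1) / ((2:ℝ)^(4*r) * (4:ℝ)^(2*r^2)) ≤ (x/2) * L^2 := by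
    have e1 : (x/2) * L^2 = x^5 * ((x/2)^(2*r-2))^2 / (8 * ((4:ℝ)^(r^2))^2) := by
      rw [hL, hx]
      field_simp
      ring
    have e2 : ((x/2)^(2*r-2))^2 = x^(4*r-4) / (2:ℝ)^(4*r-4) := by
      rw [← pow_mul, show (2*r-2)*2 = 4*r-4 from by omega, div_pow]
    have e3 : ((4:ℝ)^(r^2))^2 = (4:ℝ)^(2*r^2) := by
      rw [← pow_mul, show r^2*2 = 2*r^2 from by omega]
    have e4 : x^5 * (x^(4*r-4) / (2:ℝ)^(4*r-4)) / (8 * (4:ℝ)^(2*r^2))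
        = x^(4*r+1) / (8 * (2:ℝ)^(4*r-4) * (4:ℝ)^(2*r^2)) := by
      rw [show 4*r+1 = 5+(4*r-4) from by omega, pow_add]
      field_simp
    rw [e1, e2, e3, e4]
    apply div_le_div_of_nonneg_left (by positivity) (by positivity)
    have h24 : (2:ℝ)^(4*r) = 16 * (2:ℝ)^(4*r-4) := by
      rw [show 4*r = 4 + (4*r-4) from by omega, pow_add]
      norm_num
    have hp : (0:ℝ) < (2:ℝ)^(4*r-4) := by positivity
    have hq : (0:ℝ) < (4:ℝ)^(2*r^2) := by positivity
    rw [h24]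
    nlinarith [mul_pos hp hq]
  -- put everything together
  have hπ : (0:ℝ) < π := Real.pi_pos
  have hE : (2:ℝ)^(2*r) * ((2:ℝ)^(2*r) * ((2:ℝ)^(4*r) * (4:ℝ)^(2*r^2)))⁻¹
      = ((2:ℝ)^(4*r) * (4:ℝ)^(2*r^2))⁻¹ := by
    field_simp
  calc (2:ℝ)^(2*r) * (3:ℝ)^(-2*μ) * ((2:ℝ)^(2*r) * ((2:ℝ)^(4*r) * (4:ℝ)^(2*r^2)))⁻¹
        * x^(-2*μ + 4*(r:ℝ) - 2/s + 1)
      = (3:ℝ)^(-2*μ) * x^(-2*μ + 4*(r:ℝ) - 2/s + 1) / ((2:ℝ)^(4*r) * (4:ℝ)^(2*r^2)) := by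
        rw [mul_comm ((2:ℝ)^(2*r)) ((3:ℝ)^(-2*μ)), mul_assoc ((3:ℝ)^(-2*μ)), hE]
        ring
    _ = c₀^2 * x^(4*r+1 : ℕ) / ((2:ℝ)^(4*r) * (4:ℝ)^(2*r^2)) := by rw [hrpow]
    _ = c₀^2 * (x^(4*r+1 : ℕ) / ((2:ℝ)^(4*r) * (4:ℝ)^(2*r^2))) := by ring
    _ ≤ c₀^2 * ((x/2) * L^2) := by
        have := mul_le_mul_of_nonneg_left hLval (by positivity : (0:ℝ) ≤ c₀^2)
        linarith
    _ ≤ ((((N+1)/2 : ℕ)):ℝ) * ((π/2) * (c₀ * a * L)^2) := by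
        rw [hasq2]
        have e5 : (π/2) * (c₀^2 * (2/π) * L^2) = c₀^2 * L^2 := by
          field_simp
        rw [e5]
        have h0 : (0:ℝ) ≤ c₀^2 * L^2 := by positivity
        nlinarith [mul_le_mul_of_nonneg_right hcard2 h0]
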